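/- For all n ≥ 2 and m ≥ 2, the pseudo-dimension of the class {v ↦ rev_v(c) : c ≥ 0} of n-bidder, m-item MBA revenue functions, viewed as real-valued functions on the set of n-bidder, m-item valuation vectors with nonnegative valuations, equals 2. In particular, no set of three valuation vectors can be pseudo-shattered by this class, and there exists a pseudo-shattered set of two valuation vectors. -/

import Mathlib

open Finset MeasureTheory

/-- An `n`-bidder, `m`-item allocation: pairwise disjoint bundles of items. -/
def Alloc (n m : ℕ) : Type :=
  {o : Fin n → Finset (Fin m) // ∀ i j, i ≠ j → o i ∩ o j = ∅}

instance (n m : ℕ) : Inhabited (Alloc n m) :=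
  ⟨⟨fun _ => ∅, fun _ _ _ => by simp⟩⟩

instance (n m : ℕ) : Fintype (Alloc n m) :=
  Subtype.fintype _

instance (n m : ℕ) : Nonempty (Alloc n m) := ⟨default⟩

/-- Maximum of a real-valued function over all allocations. -/
noncomputable def allocMax {n m : ℕ} (f : Alloc n m → ℝ) : ℝ :=
  Finset.univ.sup' Finset.univ_nonempty f

/-- A fixed (canonical) maximizer of a real-valued function over all allocations. -/
noncomputable def chooseMax {n m : ℕ} (f : Alloc n m → ℝ) : Alloc n m :=
  Classical.choose (Finset.exists_max_image Finset.univ f Finset.univ_nonempty)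

/-- `os` maximizes the boosted weighted social welfare. -/
def IsMaxAlloc {n m : ℕ} (w : Fin n → ℝ) (lam : Alloc n m → ℝ)
    (v : Fin n → Finset (Fin m) → ℝ) (os : Alloc n m) : Prop :=
  ∀ o : Alloc n m, (∑ j, w j * v j (o.1 j)) + lam o ≤ (∑ j, w j * v j (os.1 j)) + lam os

/-- Revenue of the AMA with weights `w`, boosts `lam`, on valuations `v`, when the
chosen (welfare-maximizing) allocation is `os`. -/
noncomputable def amaRev {n m : ℕ} (w : Fin n → ℝ) (lam : Alloc n m → ℝ)
    (v : Fin n → Finset (Fin m) → ℝ) (os : Alloc n m) : ℝ :=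
  ∑ j, (w j)⁻¹ *
    (allocMax (fun o => (∑ l ∈ Finset.univ.erase j, w l * v l (o.1 l)) + lam o)
      - ((∑ l ∈ Finset.univ.erase j, w l * v l (os.1 l)) + lam os))

/-- The boosts of the `c`-MBA. -/
def mbaLam {n m : ℕ} (c : ℝ) : Alloc n m → ℝ :=
  fun o => if ∃ i, o.1 i = Finset.univ then c else 0

/-- Revenue of the `c`-MBA (with a fixed tie-breaking rule). -/
noncomputable def mbaRev {n m : ℕ} (v : Fin n → Finset (Fin m) → ℝ) (c : ℝ) : ℝ :=
  amaRev (fun _ => 1) (mbaLam c) v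
    (chooseMax fun o => (∑ j, v j (o.1 j)) + mbaLam c o)

/-- Revenue of the MBARP with grand-bundle boost `c` and item reserve prices `r`
(with a fixed tie-breaking rule); the seller participates as bidder `0`. -/
noncomputable def mbarpRev {n m : ℕ} (v : Fin n → Finset (Fin m) → ℝ) (c : ℝ)
    (r : Fin m → ℝ) : ℝ :=
  let vx : Fin (n + 1) → Finset (Fin m) → ℝ :=
    fun i b => Fin.cases (∑ j ∈ b, r j) (fun i' => v i' b) i
  let g : Fin (n + 1) → Alloc (n + 1) m → ℝ :=
    fun i o => (∑ l ∈ Finset.univ.erase i, vx l (o.1 l)) + mbaLam c o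
  let os : Alloc (n + 1) m := chooseMax fun o => (∑ i, vx i (o.1 i)) + mbaLam c o
  ∑ i : Fin n, (allocMax (g i.succ) - g i.succ os)

/-- Empirical Rademacher complexity of a class `F` on the sample `S`. -/
noncomputable def empRad {X : Type*} (F : Set (X → ℝ)) {N : ℕ} (S : Fin N → X) : ℝ :=
  ((2 : ℝ) ^ N)⁻¹ * ∑ σ : Fin N → Bool,
    ⨆ f ∈ F, (N : ℝ)⁻¹ * ∑ i, (if σ i then (1 : ℝ) else -1) * f (S i)

/-- Rademacher complexity: expected empirical Rademacher complexity over i.i.d. samples. -/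
noncomputable def radComp {X : Type*} [MeasurableSpace X] (D : Measure X)
    (F : Set (X → ℝ)) (N : ℕ) : ℝ :=
  ∫ S, empRad F S ∂(Measure.pi fun _ : Fin N => D)

/-- Pseudo-shattering of the tuple `x` by the class `F`, with witnesses `z`. -/
def PShatters {X : Type*} (F : Set (X → ℝ)) {k : ℕ} (x : Fin k → X) : Prop :=
  ∃ z : Fin k → ℝ, ∀ T : Finset (Fin k), ∃ f ∈ F,
    (∀ i, i ∈ T → f (x i) ≤ z i) ∧ (∀ i, i ∉ T → z i < f (x i))

/-- A valuation is additive if it is determined by its values on singletons. -/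
def AdditiveVal {n m : ℕ} (v : Fin n → Finset (Fin m) → ℝ) : Prop :=
  ∀ i b, v i b = ∑ j ∈ b, v i {j}

/-- Valuation vectors with nonnegative values (and zero on the empty bundle). -/
abbrev ValNN (n m : ℕ) : Type :=
  {v : Fin n → Finset (Fin m) → ℝ // (∀ i, v i ∅ = 0) ∧ ∀ i b, 0 ≤ v i b}

/-- The class of `n`-bidder, `m`-item MBA revenue functions `v ↦ rev_v(c)`, `c ≥ 0`. -/
def mbaClass (n m : ℕ) : Set (ValNN n m → ℝ) :=
  {f | ∃ c : ℝ, 0 ≤ c ∧ f = fun v => mbaRev v.1 c}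


section Stmt17Aux

variable {n m : ℕ}

lemma le_allocMax (f : Alloc n m → ℝ) (o : Alloc n m) : f o ≤ allocMax f :=
  Finset.le_sup' f (Finset.mem_univ o)

lemma allocMax_le {f : Alloc n m → ℝ} {t : ℝ} (h : ∀ o, f o ≤ t) : allocMax f ≤ t :=
  Finset.sup'_le _ _ fun o _ => h o

lemma le_chooseMax (f : Alloc n m → ℝ) (o : Alloc n m) : f o ≤ f (chooseMax f) :=
  (Classical.choose_spec
    (Finset.exists_max_image Finset.univ f Finset.univ_nonempty)).2 o (Finset.mem_univ o)

lemma allocMax_eq (f : Alloc n m → ℝ) : allocMax f = f (chooseMax f) :=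
  le_antisymm (allocMax_le fun o => le_chooseMax f o) (le_allocMax f _)

lemma allocMax_congr {f g : Alloc n m → ℝ} (h : ∀ o, f o = g o) :
    allocMax f = allocMax g := by
  unfold allocMax; exact Finset.sup'_congr _ rfl fun o _ => h o

lemma mbaLam_grand {c : ℝ} {o : Alloc n m} (h : ∃ i, o.1 i = Finset.univ) :
    mbaLam c o = c := if_pos h

lemma mbaLam_not {c : ℝ} {o : Alloc n m} (h : ¬ ∃ i, o.1 i = Finset.univ) :
    mbaLam c o = 0 := if_neg h

lemma mbaLam_nonneg {c : ℝ} (hc : 0 ≤ c) (o : Alloc n m) : 0 ≤ mbaLam c o := by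
  unfold mbaLam; split_ifs <;> simp [hc]

lemma mbaLam_le_c {c : ℝ} (hc : 0 ≤ c) (o : Alloc n m) : mbaLam c o ≤ c := by
  unfold mbaLam; split_ifs <;> simp [hc]

lemma mbaLam_mono {c c' : ℝ} (h : c ≤ c') (o : Alloc n m) : mbaLam c o ≤ mbaLam c' o := by
  unfold mbaLam; split_ifs <;> simp [h]

lemma mbaLam_le {c c' : ℝ} (h : c ≤ c') (o : Alloc n m) :
    mbaLam c' o ≤ mbaLam c o + (c' - c) := by
  unfold mbaLam; split_ifs <;> linarith

/-- Closed form for the MBA revenue. -/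
lemma mbaRev_eq (v : Fin n → Finset (Fin m) → ℝ) (c : ℝ) :
    mbaRev v c =
      (∑ j : Fin n, allocMax fun o : Alloc n m =>
          (∑ l ∈ Finset.univ.erase j, v l (o.1 l)) + mbaLam c o)
        - n * allocMax (fun o : Alloc n m => (∑ j, v j (o.1 j)) + mbaLam c o)
        + ∑ j, v j ((chooseMax fun o : Alloc n m => (∑ j, v j (o.1 j)) + mbaLam c o).1 j) := by
  set os := chooseMax fun o : Alloc n m => (∑ j, v j (o.1 j)) + mbaLam c o with hos
  have hM : (∑ j, v j (os.1 j)) + mbaLam c os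
      = allocMax fun o : Alloc n m => (∑ j, v j (o.1 j)) + mbaLam c o :=
    (allocMax_eq (fun o : Alloc n m => (∑ j, v j (o.1 j)) + mbaLam c o)).symm
  rw [mbaRev, amaRev]
  simp only [inv_one, one_mul, ← hos]
  have h1 : ∀ j : Fin n, (∑ l ∈ Finset.univ.erase j, v l (os.1 l)) + mbaLam c os
      = ((∑ l, v l (os.1 l)) + mbaLam c os) - v j (os.1 j) := by
    intro j
    rw [Finset.sum_erase_eq_sub (Finset.mem_univ j)]; ring
  have h2 : ∀ j : Fin n,
      (allocMax fun o : Alloc n m => (∑ l ∈ Finset.univ.erase j, v l (o.1 l)) + mbaLam c o)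
        - ((∑ l ∈ Finset.univ.erase j, v l (os.1 l)) + mbaLam c os)
      = (allocMax fun o : Alloc n m => (∑ l ∈ Finset.univ.erase j, v l (o.1 l)) + mbaLam c o)
        - ((∑ l, v l (os.1 l)) + mbaLam c os) + v j (os.1 j) := by
    intro j; rw [h1 j]; ring
  rw [Finset.sum_congr rfl fun j _ => h2 j]
  rw [Finset.sum_add_distrib, Finset.sum_sub_distrib, Finset.sum_const, Finset.card_univ,
    Fintype.card_fin, hM]
  push_cast
  ring

/-- Quasiconcavity of the MBA revenue in the boost `c`. -/
lemma mbaRev_quasi (v : Fin n → Finset (Fin m) → ℝ) {c₁ c₂ c₃ : ℝ}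
    (h0 : 0 ≤ c₁) (h12 : c₁ ≤ c₂) (h23 : c₂ ≤ c₃) :
    min (mbaRev v c₁) (mbaRev v c₃) ≤ mbaRev v c₂ := by
  set Wel : Alloc n m → ℝ := fun o => ∑ j, v j (o.1 j) with hWel
  set A : ℝ → Fin n → ℝ := fun c j => allocMax fun o : Alloc n m =>
      (∑ l ∈ Finset.univ.erase j, v l (o.1 l)) + mbaLam c o with hA
  set Mx : ℝ → ℝ := fun c => allocMax fun o : Alloc n m => Wel o + mbaLam c o with hMx
  set os : ℝ → Alloc n m := fun c => chooseMax fun o : Alloc n m => Wel o + mbaLam c o with hos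
  have h02 : 0 ≤ c₂ := h0.trans h12
  have h03 : 0 ≤ c₃ := h02.trans h23
  have hrev : ∀ c, mbaRev v c = (∑ j, A c j) - n * Mx c + Wel (os c) := fun c => mbaRev_eq v c
  have hMos : ∀ c, Wel (os c) + mbaLam c (os c) = Mx c := fun c =>
    (allocMax_eq (fun o : Alloc n m => Wel o + mbaLam c o)).symm
  by_cases h : ∃ i, ((os c₂).1 i) = Finset.univ
  · -- the chosen allocation at c₂ is a grand-bundle allocation
    by_cases h3 : ∃ i, ((os c₃).1 i) = Finset.univ
    · refine (min_le_right _ _).trans ?_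
      have hK1 : Mx c₃ ≤ Mx c₂ + (c₃ - c₂) := allocMax_le fun o => by
        have hl := mbaLam_le h23 o
        have hle := le_allocMax (fun o : Alloc n m => Wel o + mbaLam c₂ o) o
        change Wel o + mbaLam c₂ o ≤ Mx c₂ at hle
        linarith
      have hK2 : Mx c₂ + (c₃ - c₂) ≤ Mx c₃ := by
        have hle : Wel (os c₂) + mbaLam c₃ (os c₂) ≤ Mx c₃ :=
          le_allocMax (fun o : Alloc n m => Wel o + mbaLam c₃ o) _
        rw [mbaLam_grand h] at hle
        have h2 : Wel (os c₂) + c₂ = Mx c₂ := by rw [← hMos c₂, mbaLam_grand h]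
        linarith
      have hW3 : Wel (os c₃) = Mx c₃ - c₃ := by rw [← hMos c₃, mbaLam_grand h3]; ring
      have hW2 : Wel (os c₂) = Mx c₂ - c₂ := by rw [← hMos c₂, mbaLam_grand h]; ring
      have hAj : ∀ j, A c₃ j ≤ A c₂ j + (c₃ - c₂) := fun j => allocMax_le fun o => by
        have hl := mbaLam_le h23 o
        have hle := le_allocMax
          (fun o : Alloc n m => (∑ l ∈ Finset.univ.erase j, v l (o.1 l)) + mbaLam c₂ o) o
        change (∑ l ∈ Finset.univ.erase j, v l (o.1 l)) + mbaLam c₂ o ≤ A c₂ j at hle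
        linarith
      have hsum : ∑ j, A c₃ j ≤ (∑ j, A c₂ j) + n * (c₃ - c₂) := by
        calc ∑ j, A c₃ j ≤ ∑ j : Fin n, (A c₂ j + (c₃ - c₂)) :=
              Finset.sum_le_sum fun j _ => hAj j
          _ = (∑ j, A c₂ j) + n * (c₃ - c₂) := by
              rw [Finset.sum_add_distrib, Finset.sum_const, Finset.card_univ, Fintype.card_fin]
              push_cast; ring
      rw [hrev c₂, hrev c₃, hW3, hW2]
      have := le_antisymm hK1 hK2
      rw [this]
      linarith
    · -- then necessarily c₂ = c₃
      have hle1 : Mx c₃ ≤ Mx c₂ := by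
        have e3 : Wel (os c₃) = Mx c₃ := by rw [← hMos c₃, mbaLam_not h3, add_zero]
        have hle : Wel (os c₃) + mbaLam c₂ (os c₃) ≤ Mx c₂ :=
          le_allocMax (fun o : Alloc n m => Wel o + mbaLam c₂ o) _
        have := mbaLam_nonneg h02 (os c₃)
        linarith
      have hK2 : Mx c₂ + (c₃ - c₂) ≤ Mx c₃ := by
        have hle : Wel (os c₂) + mbaLam c₃ (os c₂) ≤ Mx c₃ :=
          le_allocMax (fun o : Alloc n m => Wel o + mbaLam c₃ o) _
        rw [mbaLam_grand h] at hle
        have h2 : Wel (os c₂) + c₂ = Mx c₂ := by rw [← hMos c₂, mbaLam_grand h]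
        linarith
      have : c₂ = c₃ := le_antisymm h23 (by linarith)
      rw [this]
      exact min_le_right _ _
  · -- the chosen allocation at c₂ is not grand: revenue is ≥ revenue at c₁
    refine (min_le_left _ _).trans ?_
    have heq : Mx c₂ = Wel (os c₂) := by rw [← hMos c₂, mbaLam_not h, add_zero]
    have hle : Mx c₁ ≤ Mx c₂ := allocMax_le fun o => by
      have hl := mbaLam_mono h12 o
      have hle2 := le_allocMax (fun o : Alloc n m => Wel o + mbaLam c₂ o) o
      change Wel o + mbaLam c₂ o ≤ Mx c₂ at hle2
      linarith
    have hge : Mx c₂ ≤ Mx c₁ := by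
      have h1 : Wel (os c₂) + mbaLam c₁ (os c₂) ≤ Mx c₁ :=
        le_allocMax (fun o : Alloc n m => Wel o + mbaLam c₁ o) _
      have := mbaLam_nonneg h0 (os c₂)
      linarith
    have hMeq : Mx c₁ = Mx c₂ := le_antisymm hle hge
    have hW : Wel (os c₁) ≤ Wel (os c₂) := by
      have h1 : Wel (os c₁) + mbaLam c₁ (os c₁) = Mx c₁ := hMos c₁
      have := mbaLam_nonneg h0 (os c₁)
      linarith [heq ▸ hMeq]
    have hAle : ∀ j : Fin n, A c₁ j ≤ A c₂ j := fun j => allocMax_le fun o => by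
      have hl := mbaLam_mono h12 o
      have hle2 := le_allocMax
        (fun o : Alloc n m => (∑ l ∈ Finset.univ.erase j, v l (o.1 l)) + mbaLam c₂ o) o
      change (∑ l ∈ Finset.univ.erase j, v l (o.1 l)) + mbaLam c₂ o ≤ A c₂ j at hle2
      linarith
    rw [hrev c₁, hrev c₂, hMeq]
    have hsum : ∑ j, A c₁ j ≤ ∑ j, A c₂ j := Finset.sum_le_sum fun j _ => hAle j
    linarith

/-- Three "interval-like" predicates cannot realize all eight sign patterns. -/
lemma no3 {q : Fin 3 → ℝ → Prop} {d : Fin 3 → ℝ} {e : ℝ}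
    (hd0 : ∀ i, 0 ≤ d i) (he0 : 0 ≤ e)
    (conv : ∀ i a b c', 0 ≤ a → a ≤ b → b ≤ c' → q i a → q i c' → q i b)
    (he : ∀ i, q i e) (hd : ∀ i j, i ≠ j → q i (d j)) (hnd : ∀ i, ¬ q i (d i)) :
    False := by
  have pair : ∀ i j : Fin 3, i ≠ j →
      ¬ (d j ≤ d i ∧ d i ≤ e ∨ e ≤ d i ∧ d i ≤ d j) := by
    rintro i j hij (⟨u1, u2⟩ | ⟨u1, u2⟩)
    · exact hnd i (conv i (d j) (d i) e (hd0 j) u1 u2 (hd i j hij) (he i))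
    · exact hnd i (conv i e (d i) (d j) he0 u1 u2 (he i) (hd i j hij))
  rcases le_total (d 0) e with h0 | h0 <;> rcases le_total (d 1) e with h1 | h1
  · rcases le_total (d 0) (d 1) with h | h
    · exact pair 1 0 (by decide) (Or.inl ⟨h, h1⟩)
    · exact pair 0 1 (by decide) (Or.inl ⟨h, h0⟩)
  · rcases le_total (d 2) e with h2 | h2
    · rcases le_total (d 0) (d 2) with h | h
      · exact pair 2 0 (by decide) (Or.inl ⟨h, h2⟩)
      · exact pair 0 2 (by decide) (Or.inl ⟨h, h0⟩)
    · rcases le_total (d 1) (d 2) with h | h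
      · exact pair 1 2 (by decide) (Or.inr ⟨h1, h⟩)
      · exact pair 2 1 (by decide) (Or.inr ⟨h2, h⟩)
  · rcases le_total (d 2) e with h2 | h2
    · rcases le_total (d 1) (d 2) with h | h
      · exact pair 2 1 (by decide) (Or.inl ⟨h, h2⟩)
      · exact pair 1 2 (by decide) (Or.inl ⟨h, h1⟩)
    · rcases le_total (d 0) (d 2) with h | h
      · exact pair 0 2 (by decide) (Or.inr ⟨h0, h⟩)
      · exact pair 2 0 (by decide) (Or.inr ⟨h2, h⟩)
  · rcases le_total (d 0) (d 1) with h | h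
    · exact pair 0 1 (by decide) (Or.inr ⟨h0, h⟩)
    · exact pair 1 0 (by decide) (Or.inr ⟨h1, h⟩)

/-- No triple of valuation vectors is pseudo-shattered by the MBA class. -/
lemma no_three (x : Fin 3 → ValNN n m) : ¬ PShatters (mbaClass n m) x := by
  rintro ⟨z, hz⟩
  have get : ∀ T : Finset (Fin 3), ∃ c : ℝ, 0 ≤ c ∧
      (∀ i ∈ T, mbaRev (x i).1 c ≤ z i) ∧ (∀ i ∉ T, z i < mbaRev (x i).1 c) := by
    intro T
    obtain ⟨f, ⟨c, hc, rfl⟩, hf1, hf2⟩ := hz T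
    exact ⟨c, hc, hf1, hf2⟩
  obtain ⟨e, he0, -, hee⟩ := get ∅
  have hd : ∀ k : Fin 3, ∃ c : ℝ, 0 ≤ c ∧ mbaRev (x k).1 c ≤ z k ∧
      (∀ i, i ≠ k → z i < mbaRev (x i).1 c) := by
    intro k
    obtain ⟨c, hc0, hc1, hc2⟩ := get {k}
    exact ⟨c, hc0, hc1 k (Finset.mem_singleton_self k),
      fun i hik => hc2 i (by simp [hik])⟩
  choose d hd0 hdk hdo using hd
  exact no3 (q := fun i c => z i < mbaRev (x i).1 c) (d := d) (e := e) hd0 he0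
    (fun i a b c' ha hab hbc hqa hqc =>
      lt_of_lt_of_le (lt_min hqa hqc) (mbaRev_quasi (x i).1 ha hab hbc))
    (fun i => hee i (Finset.notMem_empty i))
    (fun i j hij => hdo j i hij)
    (fun i h => absurd (hdk i) (not_le.2 h))

/-! ### The lower-bound construction -/

/-- Bidder `i0` values item `j0` at `a`, bidder `i1` values item `j1` at `a`,
everyone else values everything at `0`. -/
def lbV (i0 i1 : Fin n) (j0 j1 : Fin m) (a : ℝ) : Fin n → Finset (Fin m) → ℝ :=
  fun i b => if i = i0 then (if j0 ∈ b then a else 0)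
    else if i = i1 then (if j1 ∈ b then a else 0) else 0

lemma lbV_eq {i0 i1 : Fin n} {j0 j1 : Fin m} (hi : i0 ≠ i1) (a : ℝ)
    (i : Fin n) (b : Finset (Fin m)) :
    lbV i0 i1 j0 j1 a i b
      = (if i = i0 then (if j0 ∈ b then a else 0) else 0)
        + (if i = i1 then (if j1 ∈ b then a else 0) else 0) := by
  by_cases p : i = i0 <;> by_cases q : i = i1
  · exact absurd (p.symm.trans q) hi
  · simp [lbV, p, q, hi]
  · simp [lbV, p, q, Ne.symm hi]
  · simp [lbV, p, q]

lemma sum_lbV {i0 i1 : Fin n} {j0 j1 : Fin m} (hi : i0 ≠ i1) (a : ℝ)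
    (s : Finset (Fin n)) (b : Fin n → Finset (Fin m)) :
    ∑ i ∈ s, lbV i0 i1 j0 j1 a i (b i)
      = (if i0 ∈ s then (if j0 ∈ b i0 then a else 0) else 0)
        + (if i1 ∈ s then (if j1 ∈ b i1 then a else 0) else 0) := by
  simp only [lbV_eq hi a, Finset.sum_add_distrib, Finset.sum_ite_eq']

/-- The split allocation: `i0` gets `{j0}`, `i1` gets `{j1}`. -/
def oSplit (i0 i1 : Fin n) (j0 j1 : Fin m) (hj : j0 ≠ j1) : Alloc n m :=
  ⟨fun i => if i = i0 then {j0} else if i = i1 then {j1} else ∅, by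
    intro i j hij
    dsimp only
    split_ifs <;>
      simp_all [Finset.singleton_inter_of_notMem, Finset.mem_singleton, Ne.symm hj]⟩

/-- The grand allocation assigning everything to bidder `k`. -/
def oGrand (k : Fin n) : Alloc n m :=
  ⟨fun i => if i = k then Finset.univ else ∅, by
    intro i j hij
    by_cases p : i = k <;> by_cases q : j = k
    · exact absurd (p.trans q.symm) hij
    · simp [p, q]
    · simp [p, q]
    · simp [p, q]⟩

lemma oSplit_not_grand {i0 i1 : Fin n} {j0 j1 : Fin m} (hj : j0 ≠ j1) :
    ¬ ∃ i, (oSplit i0 i1 j0 j1 hj).1 i = Finset.univ := by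
  rintro ⟨i, hiu⟩
  have h0 : j0 ∈ (oSplit i0 i1 j0 j1 hj).1 i := hiu ▸ Finset.mem_univ j0
  have h1 : j1 ∈ (oSplit i0 i1 j0 j1 hj).1 i := hiu ▸ Finset.mem_univ j1
  simp only [oSplit] at h0 h1
  split_ifs at h0 h1 with p q
  · exact hj (Finset.mem_singleton.1 h1).symm
  · exact hj (Finset.mem_singleton.1 h0)
  · exact Finset.notMem_empty _ h0

lemma oGrand_grand (k : Fin n) : ∃ i, (oGrand k : Alloc n m).1 i = Finset.univ :=
  ⟨k, if_pos rfl⟩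

lemma grand_wel_le {i0 i1 : Fin n} {j0 j1 : Fin m} (hi : i0 ≠ i1) {a : ℝ} (ha : 0 ≤ a)
    {o : Alloc n m} (h : ∃ i, o.1 i = Finset.univ) :
    ∑ i, lbV i0 i1 j0 j1 a i (o.1 i) ≤ a := by
  obtain ⟨i, hiu⟩ := h
  have hempty : ∀ i', i' ≠ i → o.1 i' = ∅ := fun i' hne => by
    have := o.2 i' i hne
    rwa [hiu, Finset.inter_univ] at this
  rw [sum_lbV hi a Finset.univ o.1]
  simp only [Finset.mem_univ, if_true]
  by_cases p : i0 = i
  · have h1 : o.1 i1 = ∅ := hempty i1 fun h => hi (p.trans h.symm)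
    rw [h1]
    simp only [Finset.notMem_empty, if_false, add_zero]
    split_ifs <;> simp [ha]
  · have h0 : o.1 i0 = ∅ := hempty i0 p
    rw [h0]
    simp only [Finset.notMem_empty, if_false, zero_add]
    split_ifs <;> simp [ha]

lemma wel_le_two {i0 i1 : Fin n} {j0 j1 : Fin m} (hi : i0 ≠ i1) {a : ℝ} (ha : 0 ≤ a)
    (o : Alloc n m) :
    ∑ i, lbV i0 i1 j0 j1 a i (o.1 i) ≤ a + a := by
  rw [sum_lbV hi a Finset.univ o.1]
  simp only [Finset.mem_univ, if_true]
  gcongr <;> split_ifs <;> simp [ha]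

lemma wel_oSplit {i0 i1 : Fin n} {j0 j1 : Fin m} (hi : i0 ≠ i1) (hj : j0 ≠ j1) (a : ℝ) :
    ∑ i, lbV i0 i1 j0 j1 a i ((oSplit i0 i1 j0 j1 hj).1 i) = a + a := by
  rw [sum_lbV hi a Finset.univ]
  have e0 : (oSplit i0 i1 j0 j1 hj).1 i0 = {j0} := if_pos rfl
  have e1 : (oSplit i0 i1 j0 j1 hj).1 i1 = {j1} := by
    show (if i1 = i0 then _ else _) = _
    rw [if_neg hi.symm, if_pos rfl]
  rw [e0, e1]
  simp

lemma wel_oGrand0 {i0 i1 : Fin n} {j0 j1 : Fin m} (hi : i0 ≠ i1) (a : ℝ) :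
    ∑ i, lbV i0 i1 j0 j1 a i ((oGrand i0 : Alloc n m).1 i) = a := by
  rw [sum_lbV hi a Finset.univ]
  have e0 : (oGrand i0 : Alloc n m).1 i0 = Finset.univ := if_pos rfl
  have e1 : (oGrand i0 : Alloc n m).1 i1 = ∅ := if_neg hi.symm
  rw [e0, e1]
  simp

/-- The boosted welfare maximum for the lower-bound valuations. -/
lemma Mx_lbV {i0 i1 : Fin n} {j0 j1 : Fin m} (hi : i0 ≠ i1) (hj : j0 ≠ j1)
    {a c : ℝ} (ha : 0 ≤ a) (hc : 0 ≤ c) :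
    allocMax (fun o : Alloc n m => (∑ i, lbV i0 i1 j0 j1 a i (o.1 i)) + mbaLam c o)
      = max (a + a) (a + c) := by
  apply le_antisymm
  · apply allocMax_le
    intro o
    by_cases hg : ∃ i, o.1 i = Finset.univ
    · rw [mbaLam_grand hg]
      exact le_max_of_le_right (by linarith [grand_wel_le (j0 := j0) (j1 := j1) hi ha hg])
    · rw [mbaLam_not hg]
      exact le_max_of_le_left (by linarith [wel_le_two (j0 := j0) (j1 := j1) hi ha o])
  · apply max_le
    · have := le_allocMax
        (fun o : Alloc n m => (∑ i, lbV i0 i1 j0 j1 a i (o.1 i)) + mbaLam c o)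
        (oSplit i0 i1 j0 j1 hj)
      rwa [wel_oSplit hi hj a, mbaLam_not (oSplit_not_grand hj), add_zero] at this
    · have := le_allocMax
        (fun o : Alloc n m => (∑ i, lbV i0 i1 j0 j1 a i (o.1 i)) + mbaLam c o)
        (oGrand i0)
      rwa [wel_oGrand0 hi a, mbaLam_grand (oGrand_grand i0)] at this


lemma A_i0_eq {i0 i1 : Fin n} {j0 j1 : Fin m} (hi : i0 ≠ i1) {a c : ℝ}
    (ha : 0 ≤ a) (hc : 0 ≤ c) :
    allocMax (fun o : Alloc n m =>
      (∑ l ∈ Finset.univ.erase i0, lbV i0 i1 j0 j1 a l (o.1 l)) + mbaLam c o) = a + c := by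
  have h0 : i0 ∉ Finset.univ.erase i0 := Finset.notMem_erase _ _
  have h1 : i1 ∈ Finset.univ.erase i0 := Finset.mem_erase.2 ⟨hi.symm, Finset.mem_univ _⟩
  apply le_antisymm
  · apply allocMax_le
    intro o
    rw [sum_lbV hi a _ o.1, if_neg h0, if_pos h1]
    have hl := mbaLam_le_c hc o
    have hb : (if j1 ∈ o.1 i1 then a else 0) ≤ a := by split_ifs <;> simp [ha]
    linarith
  · have hle := le_allocMax (fun o : Alloc n m =>
      (∑ l ∈ Finset.univ.erase i0, lbV i0 i1 j0 j1 a l (o.1 l)) + mbaLam c o) (oGrand i1)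
    rw [sum_lbV hi a _ _, if_neg h0, if_pos h1] at hle
    have e1 : (oGrand i1 : Alloc n m).1 i1 = Finset.univ := if_pos rfl
    rw [e1, mbaLam_grand (oGrand_grand i1)] at hle
    simpa using hle

lemma A_i1_eq {i0 i1 : Fin n} {j0 j1 : Fin m} (hi : i0 ≠ i1) {a c : ℝ}
    (ha : 0 ≤ a) (hc : 0 ≤ c) :
    allocMax (fun o : Alloc n m =>
      (∑ l ∈ Finset.univ.erase i1, lbV i0 i1 j0 j1 a l (o.1 l)) + mbaLam c o) = a + c := by
  have h0 : i0 ∈ Finset.univ.erase i1 := Finset.mem_erase.2 ⟨hi, Finset.mem_univ _⟩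
  have h1 : i1 ∉ Finset.univ.erase i1 := Finset.notMem_erase _ _
  apply le_antisymm
  · apply allocMax_le
    intro o
    rw [sum_lbV hi a _ o.1, if_pos h0, if_neg h1]
    have hl := mbaLam_le_c hc o
    have hb : (if j0 ∈ o.1 i0 then a else 0) ≤ a := by split_ifs <;> simp [ha]
    linarith
  · have hle := le_allocMax (fun o : Alloc n m =>
      (∑ l ∈ Finset.univ.erase i1, lbV i0 i1 j0 j1 a l (o.1 l)) + mbaLam c o) (oGrand i0)
    rw [sum_lbV hi a _ _, if_pos h0, if_neg h1] at hle
    have e1 : (oGrand i0 : Alloc n m).1 i0 = Finset.univ := if_pos rfl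
    rw [e1, mbaLam_grand (oGrand_grand i0)] at hle
    simpa using hle

lemma A_other_eq {i0 i1 : Fin n} {j0 j1 : Fin m} (hi : i0 ≠ i1) (hj : j0 ≠ j1) {a c : ℝ}
    (ha : 0 ≤ a) (hc : 0 ≤ c) {j : Fin n} (hj0 : j ≠ i0) (hj1 : j ≠ i1) :
    allocMax (fun o : Alloc n m =>
      (∑ l ∈ Finset.univ.erase j, lbV i0 i1 j0 j1 a l (o.1 l)) + mbaLam c o)
      = max (a + a) (a + c) := by
  have key : ∀ o : Alloc n m, (∑ l ∈ Finset.univ.erase j, lbV i0 i1 j0 j1 a l (o.1 l))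
      = ∑ l, lbV i0 i1 j0 j1 a l (o.1 l) := by
    intro o
    rw [sum_lbV hi a _ o.1, sum_lbV hi a Finset.univ o.1]
    rw [if_pos (Finset.mem_erase.2 ⟨Ne.symm hj0, Finset.mem_univ _⟩),
        if_pos (Finset.mem_erase.2 ⟨Ne.symm hj1, Finset.mem_univ _⟩)]
    simp
  rw [allocMax_congr fun o => by rw [key o]]
  exact Mx_lbV hi hj ha hc

lemma sum_A_eq {i0 i1 : Fin n} {j0 j1 : Fin m} (hn : 2 ≤ n) (hi : i0 ≠ i1) (hj : j0 ≠ j1)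
    {a c : ℝ} (ha : 0 ≤ a) (hc : 0 ≤ c) :
    (∑ j : Fin n, allocMax fun o : Alloc n m =>
        (∑ l ∈ Finset.univ.erase j, lbV i0 i1 j0 j1 a l (o.1 l)) + mbaLam c o)
      = (a + c) + (a + c) + ((n : ℝ) - 2) * max (a + a) (a + c) := by
  have hm1 : i1 ∈ Finset.univ.erase i0 := Finset.mem_erase.2 ⟨hi.symm, Finset.mem_univ _⟩
  rw [← Finset.add_sum_erase _ _ (Finset.mem_univ i0), ← Finset.add_sum_erase _ _ hm1]
  rw [A_i0_eq hi ha hc, A_i1_eq hi ha hc]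
  have hconst : ∀ j ∈ (Finset.univ.erase i0).erase i1,
      (allocMax fun o : Alloc n m =>
        (∑ l ∈ Finset.univ.erase j, lbV i0 i1 j0 j1 a l (o.1 l)) + mbaLam c o)
      = max (a + a) (a + c) := by
    intro j hjmem
    rw [Finset.mem_erase, Finset.mem_erase] at hjmem
    exact A_other_eq hi hj ha hc hjmem.2.1 hjmem.1
  rw [Finset.sum_congr rfl hconst, Finset.sum_const]
  have hcard : ((Finset.univ.erase i0).erase i1).card = n - 2 := by
    rw [Finset.card_erase_of_mem hm1, Finset.card_erase_of_mem (Finset.mem_univ i0),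
      Finset.card_univ, Fintype.card_fin]
    omega
  rw [hcard, nsmul_eq_mul, Nat.cast_sub hn]
  push_cast
  ring

lemma lbRev_small {i0 i1 : Fin n} {j0 j1 : Fin m} (hn : 2 ≤ n) (hi : i0 ≠ i1) (hj : j0 ≠ j1)
    {a c : ℝ} (ha : 0 < a) (hc0 : 0 ≤ c) (hca : c < a) :
    mbaRev (lbV i0 i1 j0 j1 a) c = 2 * c := by
  have ha' : 0 ≤ a := ha.le
  rw [mbaRev_eq, sum_A_eq hn hi hj ha' hc0, Mx_lbV hi hj ha' hc0]
  set os := chooseMax fun o : Alloc n m =>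
    (∑ j, lbV i0 i1 j0 j1 a j (o.1 j)) + mbaLam c o with hos
  have hMos : (∑ j, lbV i0 i1 j0 j1 a j (os.1 j)) + mbaLam c os = max (a + a) (a + c) := by
    rw [← Mx_lbV hi hj ha' hc0]
    exact (allocMax_eq (fun o : Alloc n m =>
      (∑ j, lbV i0 i1 j0 j1 a j (o.1 j)) + mbaLam c o)).symm
  have hmax : max (a + a) (a + c) = a + a := max_eq_left (by linarith)
  have hWos : (∑ j, lbV i0 i1 j0 j1 a j (os.1 j)) = a + a := by
    by_cases hg : ∃ i, os.1 i = Finset.univ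
    · exfalso
      have h1 := grand_wel_le (j0 := j0) (j1 := j1) hi ha' hg
      rw [mbaLam_grand hg, hmax] at hMos
      linarith
    · rw [mbaLam_not hg, add_zero] at hMos
      rw [hMos, hmax]
  rw [hWos, hmax]
  ring

lemma lbRev_big {i0 i1 : Fin n} {j0 j1 : Fin m} (hn : 2 ≤ n) (hi : i0 ≠ i1) (hj : j0 ≠ j1)
    {a c : ℝ} (ha : 0 < a) (hca : a < c) :
    mbaRev (lbV i0 i1 j0 j1 a) c = a := by
  have ha' : 0 ≤ a := ha.le
  have hc0 : 0 ≤ c := ha'.trans hca.le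
  rw [mbaRev_eq, sum_A_eq hn hi hj ha' hc0, Mx_lbV hi hj ha' hc0]
  set os := chooseMax fun o : Alloc n m =>
    (∑ j, lbV i0 i1 j0 j1 a j (o.1 j)) + mbaLam c o with hos
  have hMos : (∑ j, lbV i0 i1 j0 j1 a j (os.1 j)) + mbaLam c os = max (a + a) (a + c) := by
    rw [← Mx_lbV hi hj ha' hc0]
    exact (allocMax_eq (fun o : Alloc n m =>
      (∑ j, lbV i0 i1 j0 j1 a j (o.1 j)) + mbaLam c o)).symm
  have hmax : max (a + a) (a + c) = a + c := max_eq_right (by linarith)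
  have hWos : (∑ j, lbV i0 i1 j0 j1 a j (os.1 j)) = a := by
    by_cases hg : ∃ i, os.1 i = Finset.univ
    · rw [mbaLam_grand hg, hmax] at hMos
      linarith
    · exfalso
      have h1 := wel_le_two (j0 := j0) (j1 := j1) hi ha' os
      rw [mbaLam_not hg, add_zero, hmax] at hMos
      linarith
  rw [hWos, hmax]
  ring

end Stmt17Aux

/-- The pseudo-dimension of the class of `n`-bidder, `m`-item
MBA revenue functions equals `2`: no set of three valuation vectors is
pseudo-shattered, and some set of two valuation vectors is pseudo-shattered. -/
theorem stmt17 (n m : ℕ) (hn : 2 ≤ n) (hm : 2 ≤ m) :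
    (∀ x : Fin 3 → ValNN n m, Function.Injective x → ¬ PShatters (mbaClass n m) x) ∧
    (∃ x : Fin 2 → ValNN n m, Function.Injective x ∧ PShatters (mbaClass n m) x) := by
  constructor
  · intro x _ h
    exact no_three x h
  · set i0 : Fin n := ⟨0, by omega⟩ with hi0
    set i1 : Fin n := ⟨1, by omega⟩ with hi1
    set j0 : Fin m := ⟨0, by omega⟩ with hj0
    set j1 : Fin m := ⟨1, by omega⟩ with hj1
    have hi : i0 ≠ i1 := by simp [hi0, hi1, Fin.ext_iff]
    have hj : j0 ≠ j1 := by simp [hj0, hj1, Fin.ext_iff]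
    have hval : ∀ a : ℝ, 0 ≤ a → (∀ i, lbV i0 i1 j0 j1 a i ∅ = 0) ∧
        ∀ i b, 0 ≤ lbV i0 i1 j0 j1 a i b := by
      intro a ha
      constructor
      · intro i; unfold lbV; split_ifs <;> simp_all
      · intro i b; unfold lbV; split_ifs <;> simp [ha]
    set x : Fin 2 → ValNN n m := fun k =>
      ⟨lbV i0 i1 j0 j1 (if k = 0 then (1 : ℝ) else 4),
        hval _ (by split_ifs <;> norm_num)⟩ with hx
    have hx0 : (x 0).1 = lbV i0 i1 j0 j1 1 := by simp [hx]
    have hx1 : (x 1).1 = lbV i0 i1 j0 j1 4 := by simp [hx]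
    have rev0s : ∀ c : ℝ, 0 ≤ c → c < 1 → mbaRev (x 0).1 c = 2 * c := fun c h1 h2 => by
      rw [hx0]; exact lbRev_small hn hi hj one_pos h1 h2
    have rev0b : ∀ c : ℝ, 1 < c → mbaRev (x 0).1 c = 1 := fun c h1 => by
      rw [hx0]; exact lbRev_big hn hi hj one_pos h1
    have rev1s : ∀ c : ℝ, 0 ≤ c → c < 4 → mbaRev (x 1).1 c = 2 * c := fun c h1 h2 => by
      rw [hx1]; exact lbRev_small hn hi hj (by norm_num) h1 h2
    refine ⟨x, ?_, ?_⟩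
    · have hne : x 0 ≠ x 1 := by
        intro h
        have h2 := congrFun (congrFun (congrArg Subtype.val h) i0) {j0}
        simp [hx, lbV] at h2
      intro k l hkl
      fin_cases k <;> fin_cases l
      · rfl
      · exact absurd hkl hne
      · exact absurd hkl.symm hne
      · rfl
    · refine ⟨![1, 3/2], ?_⟩
      intro T
      by_cases h0 : (0 : Fin 2) ∈ T <;> by_cases h1 : (1 : Fin 2) ∈ T
      · refine ⟨fun v => mbaRev v.1 0, ⟨0, le_rfl, rfl⟩, ?_, ?_⟩
        · intro i _
          have g0 : mbaRev (x 0).1 0 ≤ ![1, (3:ℝ)/2] 0 := by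
            rw [rev0s 0 le_rfl one_pos]
            norm_num [Matrix.cons_val_zero]
          have g1 : mbaRev (x 1).1 0 ≤ ![1, (3:ℝ)/2] 1 := by
            rw [rev1s 0 le_rfl (by norm_num)]
            norm_num [Matrix.cons_val_one, Matrix.head_cons]
          fin_cases i
          · exact g0
          · exact g1
        · intro i hiT
          fin_cases i
          · exact absurd h0 hiT
          · exact absurd h1 hiT
      · refine ⟨fun v => mbaRev v.1 2, ⟨2, by norm_num, rfl⟩, ?_, ?_⟩
        · intro i hiT
          have g0 : mbaRev (x 0).1 2 ≤ ![1, (3:ℝ)/2] 0 := by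
            rw [rev0b 2 (by norm_num)]
            norm_num [Matrix.cons_val_zero]
          fin_cases i
          · exact g0
          · exact absurd hiT h1
        · intro i hiT
          have g1 : ![1, (3:ℝ)/2] 1 < mbaRev (x 1).1 2 := by
            rw [rev1s 2 (by norm_num) (by norm_num)]
            norm_num [Matrix.cons_val_one, Matrix.head_cons]
          fin_cases i
          · exact absurd h0 hiT
          · exact g1
      · refine ⟨fun v => mbaRev v.1 (7/10), ⟨7/10, by norm_num, rfl⟩, ?_, ?_⟩
        · intro i hiT
          have g1 : mbaRev (x 1).1 (7/10) ≤ ![1, (3:ℝ)/2] 1 := by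
            rw [rev1s (7/10) (by norm_num) (by norm_num)]
            norm_num [Matrix.cons_val_one, Matrix.head_cons]
          fin_cases i
          · exact absurd hiT h0
          · exact g1
        · intro i hiT
          have g0 : ![1, (3:ℝ)/2] 0 < mbaRev (x 0).1 (7/10) := by
            rw [rev0s (7/10) (by norm_num) (by norm_num)]
            norm_num [Matrix.cons_val_zero]
          fin_cases i
          · exact g0
          · exact absurd h1 hiT
      · refine ⟨fun v => mbaRev v.1 (9/10), ⟨9/10, by norm_num, rfl⟩, ?_, ?_⟩
        · intro i hiT
          fin_cases i
          · exact absurd hiT h0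
          · exact absurd hiT h1
        · intro i _
          have g0 : ![1, (3:ℝ)/2] 0 < mbaRev (x 0).1 (9/10) := by
            rw [rev0s (9/10) (by norm_num) (by norm_num)]
            norm_num [Matrix.cons_val_zero]
          have g1 : ![1, (3:ℝ)/2] 1 < mbaRev (x 1).1 (9/10) := by
            rw [rev1s (9/10) (by norm_num) (by norm_num)]
            norm_num [Matrix.cons_val_one, Matrix.head_cons]
          fin_cases i
          · exact g0
          · exact g1
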